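/- Let q(x) ∈ R[x] be a monic polynomial with distinct real roots a_1,...,a_r, let R = R[Z_1,...,Z_m] and let I ⊂ R be the ideal generated by q(Z_1),...,q(Z_m). If P ∈ R satisfies P ≡ c mod I for some constant c ∈ R, then P(s_1,...,s_m) = c for every s_1,...,s_m ∈ {a_1,...,a_r}. Conversely, if P evaluates to the same constant c at every point of {a_1,...,a_r}^m, then P ≡ c mod I. -/

import Mathlib

open MvPolynomial

lemma finSuccEquiv_symm_C' {m : ℕ} (c : MvPolynomial (Fin m) ℝ) :
    (MvPolynomial.finSuccEquiv ℝ m).symm (Polynomial.C c) = rename Fin.succ c := by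
  rw [AlgEquiv.symm_apply_eq]
  induction c using MvPolynomial.induction_on with
  | C t => simp [MvPolynomial.finSuccEquiv_apply]
  | add p q hp hq => simp [hp, hq]
  | mul_X p j hp => simp [hp, MvPolynomial.finSuccEquiv_X_succ]

lemma key (r : ℕ) (a : Fin r → ℝ) (ha : Function.Injective a) :
    ∀ (m : ℕ) (P : MvPolynomial (Fin m) ℝ),
      (∀ s : Fin m → Fin r, eval (fun j => a (s j)) P = 0) →
      P ∈ Ideal.span (Set.range fun j : Fin m => ∏ i : Fin r, (X j - C (a i))) := by
  intro m
  induction m with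
  | zero =>
    intro P h
    obtain ⟨x, rfl⟩ := MvPolynomial.C_surjective (Fin 0) P
    have : x = 0 := by simpa using h Fin.elim0
    simp [this]
  | succ m ih =>
    intro P h
    set e := MvPolynomial.finSuccEquiv ℝ m with he
    set f := e P with hf
    set qY : Polynomial (MvPolynomial (Fin m) ℝ) :=
      ∏ i : Fin r, (Polynomial.X - Polynomial.C (C (a i))) with hqY
    have hqmonic : qY.Monic :=
      Polynomial.monic_prod_of_monic _ _ fun i _ => Polynomial.monic_X_sub_C _
    have hqdeg : qY.natDegree = r := by
      rw [hqY, Polynomial.natDegree_prod_of_monic _ _ (fun i _ => Polynomial.monic_X_sub_C _)]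
      simp
    set rem := f %ₘ qY with hrem
    have hremzero : ∀ s : Fin m → Fin r,
        rem.map (eval fun j => a (s j)) = 0 := by
      intro s
      by_cases h0 : rem = 0
      · simp [h0]
      have hnat : rem.natDegree < r := by
        have hd := Polynomial.degree_modByMonic_lt f hqmonic
        rw [← hrem] at hd
        have := Polynomial.natDegree_lt_natDegree h0 hd
        omega
      apply Polynomial.eq_zero_of_natDegree_lt_card_of_eval_eq_zero _ ha
      · intro i
        have hfun : (fun j => a ((Fin.cons i s : Fin (m + 1) → Fin r) j)) =
            (Fin.cons (a i) fun j => a (s j) : Fin (m + 1) → ℝ) := by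
          funext j
          refine Fin.cases ?_ ?_ j <;> simp
        have hP : Polynomial.eval (a i) (Polynomial.map (eval fun j => a (s j)) f) = 0 := by
          rw [← MvPolynomial.eval_eq_eval_mv_eval']
          have := h (Fin.cons i s)
          rwa [hfun] at this
        have hsplit : rem + qY * (f /ₘ qY) = f := Polynomial.modByMonic_add_div f qY
        have hq0 : Polynomial.eval (a i)
            (Polynomial.map (eval fun j => a (s j)) qY) = 0 := by
          rw [hqY, Polynomial.map_prod, Polynomial.eval_prod]
          refine Finset.prod_eq_zero (Finset.mem_univ i) ?_
          simp
        rw [← hsplit] at hP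
        simpa [hq0] using hP
      · calc (rem.map (eval fun j => a (s j))).natDegree ≤ rem.natDegree :=
              Polynomial.natDegree_map_le
          _ < r := hnat
          _ = Fintype.card (Fin r) := by simp
    have hcoeff : ∀ k : ℕ, rem.coeff k ∈
        Ideal.span (Set.range fun j : Fin m => ∏ i : Fin r, (X j - C (a i))) := by
      intro k
      apply ih
      intro s
      have := congrArg (fun p => Polynomial.coeff p k) (hremzero s)
      simpa [Polynomial.coeff_map] using this
    have hrename : ∀ c ∈ Ideal.span
        (Set.range fun j : Fin m => ∏ i : Fin r, (X j - C (a i))),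
        rename (Fin.succ) c ∈ Ideal.span
          (Set.range fun j : Fin (m + 1) => ∏ i : Fin r, (X j - C (a i))) := by
      intro c hc
      have h1 : (rename (R := ℝ) Fin.succ) c ∈ Ideal.map (rename (R := ℝ) Fin.succ).toRingHom
          (Ideal.span (Set.range fun j : Fin m => ∏ i : Fin r, (X j - C (a i)))) :=
        Ideal.mem_map_of_mem _ hc
      rw [Ideal.map_span] at h1
      refine Ideal.span_mono ?_ h1
      rintro _ ⟨_, ⟨j, rfl⟩, rfl⟩
      refine ⟨j.succ, ?_⟩
      simp [map_prod]
    have hremmem : (e.symm rem : MvPolynomial (Fin (m + 1)) ℝ) ∈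
        Ideal.span (Set.range fun j : Fin (m + 1) => ∏ i : Fin r, (X j - C (a i))) := by
      rw [rem.as_sum_range' (rem.natDegree + 1) (Nat.lt_succ_self _)]
      rw [map_sum]
      apply Ideal.sum_mem
      intro k _
      rw [← Polynomial.C_mul_X_pow_eq_monomial, map_mul, finSuccEquiv_symm_C']
      exact Ideal.mul_mem_right _ _ (hrename _ (hcoeff k))
    have hsplit : rem + qY * (f /ₘ qY) = f := Polynomial.modByMonic_add_div f qY
    have hq0mem : (e.symm qY : MvPolynomial (Fin (m + 1)) ℝ) ∈
        Ideal.span (Set.range fun j : Fin (m + 1) => ∏ i : Fin r, (X j - C (a i))) := by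
      have hx : e.symm (Polynomial.X) = X (0 : Fin (m + 1)) := by
        rw [AlgEquiv.symm_apply_eq, MvPolynomial.finSuccEquiv_X_zero]
      have heq : e.symm qY = ∏ i : Fin r, (X (0 : Fin (m + 1)) - C (a i)) := by
        rw [hqY, map_prod]
        refine Finset.prod_congr rfl fun i _ => ?_
        rw [map_sub, hx, finSuccEquiv_symm_C', rename_C]
      rw [heq]
      exact Ideal.subset_span ⟨0, rfl⟩
    have hPeq : P = e.symm rem + e.symm qY * e.symm (f /ₘ qY) := by
      rw [← map_mul, ← map_add, hsplit, hf, AlgEquiv.symm_apply_apply]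
    rw [hPeq]
    exact Ideal.add_mem _ hremmem (Ideal.mul_mem_right _ _ hq0mem)

/-- Let `q(x) = ∏_{i=1}^r (x - a_i)` with distinct real roots, and let
`I = (q(Z_1), ..., q(Z_m)) ⊂ ℝ[Z_1,...,Z_m]`. Then `P ≡ c mod I` if and only if `P` evaluates
to `c` at every point of `{a_1,...,a_r}^m`. -/
theorem mem_span_iff_eval_const (m r : ℕ) (a : Fin r → ℝ) (ha : Function.Injective a)
    (P : MvPolynomial (Fin m) ℝ) (c : ℝ) :
    P - C c ∈ Ideal.span (Set.range fun j : Fin m => ∏ i : Fin r, (X j - C (a i))) ↔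
      ∀ s : Fin m → Fin r, eval (fun j => a (s j)) P = c := by
  constructor
  · intro hmem s
    have hle : Ideal.span (Set.range fun j : Fin m => ∏ i : Fin r, (X j - C (a i))) ≤
        RingHom.ker (eval fun j => a (s j)) := by
      rw [Ideal.span_le]
      rintro _ ⟨j, rfl⟩
      simp only [SetLike.mem_coe, RingHom.mem_ker, map_prod, map_sub, eval_X, eval_C]
      exact Finset.prod_eq_zero (Finset.mem_univ (s j)) (by simp)
    have := hle hmem
    rw [RingHom.mem_ker, map_sub, eval_C, sub_eq_zero] at this
    exact this
  · intro hval
    apply key r a ha m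
    intro s
    rw [map_sub, eval_C, hval s, sub_self]
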